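/- Let p₁, p₂ ∈ (0,1) be real numbers and define d : ℝ → ℝ by d(x) = −x·ln x − (p₁−x)·ln(p₁−x) − (p₂−x)·ln(p₂−x) − (1−p₁−p₂+x)·ln(1−p₁−p₂+x). Then for every x in the open interval (max(0, p₁+p₂−1), min(p₁, p₂)) with x ≠ p₁·p₂, we have d(x) < d(p₁·p₂). In other words, x = p₁·p₂ is the unique maximizer of d on this interval. -/

import Mathlib

private lemma aux_hasDerivAt (p₁ p₂ x : ℝ) (hx : x ≠ 0) (h1 : p₁ - x ≠ 0)
    (h2 : p₂ - x ≠ 0) (h3 : 1 - p₁ - p₂ + x ≠ 0) :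
    HasDerivAt (fun y => -y * Real.log y - (p₁ - y) * Real.log (p₁ - y)
        - (p₂ - y) * Real.log (p₂ - y)
        - (1 - p₁ - p₂ + y) * Real.log (1 - p₁ - p₂ + y))
      (Real.log ((p₁ - x) * (p₂ - x)) - Real.log (x * (1 - p₁ - p₂ + x))) x := by
  have A : HasDerivAt (fun y : ℝ => y * Real.log y) (Real.log x + 1) x :=
    Real.hasDerivAt_mul_log hx
  have s1 : HasDerivAt (fun y : ℝ => p₁ - y) (-1) x := (hasDerivAt_id x).const_sub p₁
  have s2 : HasDerivAt (fun y : ℝ => p₂ - y) (-1) x := (hasDerivAt_id x).const_sub p₂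
  have s3 : HasDerivAt (fun y : ℝ => 1 - p₁ - p₂ + y) 1 x := by
    simpa using (hasDerivAt_id x).const_add (1 - p₁ - p₂)
  have B : HasDerivAt (fun y : ℝ => (p₁ - y) * Real.log (p₁ - y))
      ((Real.log (p₁ - x) + 1) * (-1)) x :=
    (Real.hasDerivAt_mul_log h1).comp x s1
  have C : HasDerivAt (fun y : ℝ => (p₂ - y) * Real.log (p₂ - y))
      ((Real.log (p₂ - x) + 1) * (-1)) x :=
    (Real.hasDerivAt_mul_log h2).comp x s2
  have D : HasDerivAt (fun y : ℝ => (1 - p₁ - p₂ + y) * Real.log (1 - p₁ - p₂ + y))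
      ((Real.log (1 - p₁ - p₂ + x) + 1) * 1) x :=
    (Real.hasDerivAt_mul_log h3).comp x s3
  have E := ((A.neg.sub B).sub C).sub D
  have heq : -(Real.log x + 1) - (Real.log (p₁ - x) + 1) * (-1)
      - (Real.log (p₂ - x) + 1) * (-1) - (Real.log (1 - p₁ - p₂ + x) + 1) * 1
      = Real.log ((p₁ - x) * (p₂ - x)) - Real.log (x * (1 - p₁ - p₂ + x)) := by
    rw [Real.log_mul h1 h2, Real.log_mul hx h3]; ring
  rw [heq] at E
  exact E.congr_of_eventuallyEq (Filter.Eventually.of_forall fun y => by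
    simp only [Pi.sub_apply, Pi.neg_apply]
    ring)

/-- For `p₁, p₂ ∈ (0,1)`, the relative divergence
`d(x) = −x ln x − (p₁−x) ln(p₁−x) − (p₂−x) ln(p₂−x) − (1−p₁−p₂+x) ln(1−p₁−p₂+x)`
attains its unique maximum on the open interval `(max(0, p₁+p₂−1), min(p₁, p₂))`
at `x = p₁ p₂`. -/
theorem unique_maximizer_of_relative_divergence
    (p₁ p₂ : ℝ) (hp₁ : p₁ ∈ Set.Ioo (0 : ℝ) 1) (hp₂ : p₂ ∈ Set.Ioo (0 : ℝ) 1)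
    (d : ℝ → ℝ)
    (hd : ∀ x, d x =
      -x * Real.log x - (p₁ - x) * Real.log (p₁ - x)
        - (p₂ - x) * Real.log (p₂ - x)
        - (1 - p₁ - p₂ + x) * Real.log (1 - p₁ - p₂ + x)) :
    ∀ x ∈ Set.Ioo (max 0 (p₁ + p₂ - 1)) (min p₁ p₂),
      x ≠ p₁ * p₂ → d x < d (p₁ * p₂) := by
  obtain ⟨hp₁0, hp₁1⟩ := hp₁
  obtain ⟨hp₂0, hp₂1⟩ := hp₂
  set a := max 0 (p₁ + p₂ - 1) with ha
  set b := min p₁ p₂ with hb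
  set m := p₁ * p₂ with hm
  have hdfun : d = fun y => -y * Real.log y - (p₁ - y) * Real.log (p₁ - y)
      - (p₂ - y) * Real.log (p₂ - y)
      - (1 - p₁ - p₂ + y) * Real.log (1 - p₁ - p₂ + y) := funext hd
  -- continuity of d
  have hcont : Continuous d := by
    rw [hdfun]
    have hml := Real.continuous_mul_log
    have c1 : Continuous fun y : ℝ => -y * Real.log y := by
      have := hml.neg
      simp only [neg_mul]; exact this
    have c2 : Continuous fun y : ℝ => (p₁ - y) * Real.log (p₁ - y) :=
      hml.comp (continuous_const.sub continuous_id)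
    have c3 : Continuous fun y : ℝ => (p₂ - y) * Real.log (p₂ - y) :=
      hml.comp (continuous_const.sub continuous_id)
    have c4 : Continuous fun y : ℝ => (1 - p₁ - p₂ + y) * Real.log (1 - p₁ - p₂ + y) :=
      hml.comp (continuous_const.add continuous_id)
    exact ((c1.sub c2).sub c3).sub c4
  -- m is in the interval
  have ham : a < m := by
    rw [ha, hm]
    rcases max_cases 0 (p₁ + p₂ - 1) with ⟨h, _⟩ | ⟨h, _⟩ <;> rw [h] <;> nlinarith
  have hmb : m < b := by
    rw [hb, hm]; rcases min_cases p₁ p₂ with ⟨h, _⟩ | ⟨h, _⟩ <;> rw [h] <;> nlinarith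
  -- positivity facts on (a, b)
  have hpos : ∀ y ∈ Set.Ioo a b, 0 < y ∧ 0 < p₁ - y ∧ 0 < p₂ - y ∧ 0 < 1 - p₁ - p₂ + y := by
    intro y ⟨hy1, hy2⟩
    have h0 : 0 ≤ a := le_max_left _ _
    have h1 : p₁ + p₂ - 1 ≤ a := le_max_right _ _
    have h2 : b ≤ p₁ := min_le_left _ _
    have h3 : b ≤ p₂ := min_le_right _ _
    refine ⟨by linarith, by linarith, by linarith, by linarith⟩
  -- derivative sign
  have hderiv : ∀ y ∈ Set.Ioo a b,
      deriv d y = Real.log ((p₁ - y) * (p₂ - y)) - Real.log (y * (1 - p₁ - p₂ + y)) := by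
    intro y hy
    obtain ⟨q0, q1, q2, q3⟩ := hpos y hy
    rw [hdfun]
    exact (aux_hasDerivAt p₁ p₂ y q0.ne' q1.ne' q2.ne' q3.ne').deriv
  -- strict mono on [a, m]
  have hIcc1 : Set.Icc a m ⊆ Set.Icc a b := Set.Icc_subset_Icc le_rfl hmb.le
  have hIcc2 : Set.Icc m b ⊆ Set.Icc a b := Set.Icc_subset_Icc ham.le le_rfl
  have hmono : StrictMonoOn d (Set.Icc a m) := by
    apply strictMonoOn_of_deriv_pos (convex_Icc a m) hcont.continuousOn
    intro y hy
    rw [interior_Icc] at hy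
    obtain ⟨hy1, hy2⟩ := hy
    have hyab : y ∈ Set.Ioo a b := ⟨hy1, lt_trans hy2 hmb⟩
    obtain ⟨q0, q1, q2, q3⟩ := hpos y hyab
    rw [hderiv y hyab]
    have hkey : y * (1 - p₁ - p₂ + y) < (p₁ - y) * (p₂ - y) := by nlinarith
    have := Real.log_lt_log (by positivity) hkey
    linarith
  have hanti : StrictAntiOn d (Set.Icc m b) := by
    apply strictAntiOn_of_deriv_neg (convex_Icc m b) hcont.continuousOn
    intro y hy
    rw [interior_Icc] at hy
    obtain ⟨hy1, hy2⟩ := hy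
    have hyab : y ∈ Set.Ioo a b := ⟨lt_trans ham hy1, hy2⟩
    obtain ⟨q0, q1, q2, q3⟩ := hpos y hyab
    rw [hderiv y hyab]
    have hkey : (p₁ - y) * (p₂ - y) < y * (1 - p₁ - p₂ + y) := by nlinarith
    have := Real.log_lt_log (by positivity) hkey
    linarith
  intro x hx hxm
  obtain ⟨hx1, hx2⟩ := hx
  rcases lt_or_gt_of_ne hxm with h | h
  · exact hmono ⟨hx1.le, h.le⟩ ⟨ham.le, le_rfl⟩ h
  · exact hanti ⟨le_rfl, hmb.le⟩ ⟨h.le, hx2.le⟩ h
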